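/- Let (X,d,μ) be a doubling metric measure space with dimension n, m ≥ 2, and suppose the kernels (p_t)_{t>0} satisfy the m-order Gaussian upper bound (GE_m) and that for each t > 0 the integral operator g ↦ ∫_X p_t(·,w) g(w) dμ(w) is a contraction on L²(X,μ). For a ball B = B(x,r) set U_1(B) := B(x,2r) and U_k(B) := B(x,2^k r) ∖ B(x,2^{k−1} r) for k ≥ 2, and set E_1(u) := 1 and E_k(u) := exp(2^{mk/(m−1)} u) for k ≥ 2. Then there exist constants C, c > 0 such that for all t > 0, all integers k ≥ 1, all 0 < r₁ ≤ r₂, every x ∈ X and every bounded measurable g : X → ℂ: ( ⨍_{B(x,r₁)} | ∫_{U_k(B(x,r₂))} p_t(y,w) g(w) dμ(w) |² dμ(y) )^{1/2} ≤ C · E_k( −c (r₂ / t^{1/m})^{m/(m−1)} ) · ( μ(B(x, max{r₁, t^{1/m}}))^{-1} ∫_{U_k(B(x,r₂))} |g(w)|² dμ(w) )^{1/2}. -/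

import Mathlib

open Metric MeasureTheory ENNReal

/-- The annulus `U_k(B(x,r))`: for `k = 1` it is `B(x,2r)`, and for `k ≥ 2` it is
`B(x,2^k r) \ B(x,2^{k-1} r)`. -/
def annulusSet {X : Type*} [MetricSpace X] (x : X) (r : ℝ) (k : ℕ) : Set X :=
  if k = 1 then Metric.ball x (2 * r)
  else Metric.ball x (2 ^ k * r) \ Metric.ball x (2 ^ (k - 1) * r)

/-- The factor `E_k`: `E_1(u) = 1` and `E_k(u) = exp (2^{mk/(m-1)} u)` for `k ≥ 2`. -/
noncomputable def Efactor (m : ℝ) (k : ℕ) (u : ℝ) : ℝ :=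
  if k = 1 then 1 else Real.exp (2 ^ (m * k / (m - 1)) * u)

private lemma poly_exp_bound (n c : ℝ) (hn : 0 < n) (hc : 0 < c) :
    ∃ M > 0, ∀ θ : ℝ, 1 ≤ θ → θ ^ n * Real.exp (-c * θ) ≤ M := by
  refine ⟨Real.exp (n * Real.log (2 * n / c)), Real.exp_pos _, fun θ hθ => ?_⟩
  have hθ0 : (0:ℝ) < θ := lt_of_lt_of_le one_pos hθ
  have h1 : Real.log (θ * (c / (2 * n))) ≤ θ * (c / (2 * n)) - 1 :=
    Real.log_le_sub_one_of_pos (by positivity)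
  have hsplit : Real.log (θ * (c / (2*n))) = Real.log θ + Real.log (c / (2*n)) :=
    Real.log_mul (ne_of_gt hθ0) (by positivity)
  have hlog : Real.log (c / (2*n)) = - Real.log (2*n/c) := by
    rw [← Real.log_inv]; congr 1; rw [inv_div]
  have h2 : Real.log θ ≤ θ * (c / (2 * n)) + Real.log (2 * n / c) := by
    rw [hsplit, hlog] at h1; linarith
  have hrpow : θ ^ n = Real.exp (n * Real.log θ) := by
    rw [Real.rpow_def_of_pos hθ0, mul_comm]
  rw [hrpow, ← Real.exp_add]
  apply Real.exp_le_exp.2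
  have h3 : n * Real.log θ ≤ n * (θ * (c / (2*n)) + Real.log (2*n/c)) :=
    mul_le_mul_of_nonneg_left h2 hn.le
  have hnc : n * (θ * (c / (2*n))) = c * θ / 2 := by field_simp
  nlinarith [mul_pos hc hθ0]

private lemma ennreal_inv_le_inv_of_le {a b K : ℝ≥0∞} (ha0 : a ≠ 0) (hat : a ≠ ⊤)
    (hb0 : b ≠ 0) (hbt : b ≠ ⊤) (h : a ≤ K * b) : b⁻¹ ≤ K * a⁻¹ := by
  rw [← ENNReal.mul_le_mul_iff_left ha0 hat]
  have h4 : K * a⁻¹ * a = K := by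
    rw [mul_assoc, ENNReal.inv_mul_cancel ha0 hat, mul_one]
  rw [h4]
  calc b⁻¹ * a ≤ b⁻¹ * (K * b) := mul_le_mul_right h _
    _ = K * (b⁻¹ * b) := by ring
    _ = K := by rw [ENNReal.inv_mul_cancel hb0 hbt, mul_one]

private lemma ennreal_le_mul_inv_iff {a b d : ℝ≥0∞} (hd0 : d ≠ 0) (hdt : d ≠ ⊤) :
    a ≤ b * d⁻¹ ↔ a * d ≤ b := by
  rw [← ENNReal.mul_le_mul_iff_left hd0 hdt (a := a) (b := b * d⁻¹), mul_assoc,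
    ENNReal.inv_mul_cancel hd0 hdt, mul_one]

private lemma avg_pointwise {X : Type*} [MeasurableSpace X] (μ : Measure X) {B : Set X}
    (hB : MeasurableSet B) (hB0 : μ B ≠ 0) (hBt : μ B ≠ ⊤) {f : X → ℝ≥0∞} {D : ℝ≥0∞}
    (h : ∀ y ∈ B, f y ≤ D) : (μ B)⁻¹ * ∫⁻ y in B, f y ∂μ ≤ D := by
  have h1 : ∫⁻ y in B, f y ∂μ ≤ D * μ B := by
    calc ∫⁻ y in B, f y ∂μ ≤ ∫⁻ _ in B, D ∂μ := setLIntegral_mono' hB h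
      _ = D * μ B := setLIntegral_const B D
  calc (μ B)⁻¹ * ∫⁻ y in B, f y ∂μ ≤ (μ B)⁻¹ * (D * μ B) := mul_le_mul_right h1 _
    _ = D := by rw [mul_comm D, ← mul_assoc, ENNReal.inv_mul_cancel hB0 hBt, one_mul]

private lemma gaussian_tail {X : Type*} [MetricSpace X] [MeasurableSpace X] [BorelSpace X]
    (μ : Measure X) (Cd n : ℝ) (hCd : 0 < Cd)
    (hdoub : ∀ (x : X) (r lam : ℝ), 0 < r → 1 ≤ lam →
      μ (ball x (lam * r)) ≤ ENNReal.ofReal (Cd * lam ^ n) * μ (ball x r))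
    (cG α : ℝ) (hcG : 0 < cG) (hα : 1 ≤ α) :
    ∃ A > 0, ∀ (y : X) (s : ℝ), 0 < s →
      ∫⁻ w, ENNReal.ofReal (Real.exp (-cG * (dist y w / s) ^ α)) ∂μ
        ≤ ENNReal.ofReal A * μ (ball y s) := by
  set a : ℕ → ℝ := fun j => Cd * ((2:ℝ) ^ (j+1)) ^ n * Real.exp (-cG * 2 ^ j) with ha
  have hapos : ∀ j, 0 < a j := fun j => by
    apply mul_pos (mul_pos hCd _) (Real.exp_pos _)
    exact Real.rpow_pos_of_pos (by positivity) n
  have hq : (0:ℝ) < (2:ℝ) ^ n := Real.rpow_pos_of_pos two_pos n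
  have hsum : Summable a := by
    apply summable_of_ratio_norm_eventually_le (r := 1/2) (by norm_num)
    have htend : Filter.Tendsto (fun j : ℕ => (2:ℝ)^j) Filter.atTop Filter.atTop :=
      tendsto_pow_atTop_atTop_of_one_lt one_lt_two
    filter_upwards [htend.eventually_ge_atTop (Real.log (2 * (2:ℝ)^n) / cG)] with j hj
    have hexpj : Real.exp (-cG * 2 ^ j) ≤ 1 / (2 * (2:ℝ)^n) := by
      rw [show (1:ℝ) / (2 * (2:ℝ)^n) = Real.exp (Real.log (1 / (2 * (2:ℝ)^n)))
        from (Real.exp_log (by positivity)).symm]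
      apply Real.exp_le_exp.2
      rw [one_div, Real.log_inv]
      have : Real.log (2 * (2:ℝ)^n) ≤ cG * 2 ^ j := by
        rw [div_le_iff₀ hcG] at hj; nlinarith [hj]
      linarith
    have hrec : a (j+1) = a j * ((2:ℝ)^n * Real.exp (-cG * 2 ^ j)) := by
      have h1 : ((2:ℝ) ^ (j+1+1)) ^ n = ((2:ℝ) ^ (j+1)) ^ n * (2:ℝ)^n := by
        rw [show (2:ℝ) ^ (j+1+1) = (2:ℝ)^(j+1) * 2 from by ring,
          Real.mul_rpow (by positivity) (by norm_num)]
      have h2 : Real.exp (-cG * 2 ^ (j+1)) =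
          Real.exp (-cG * 2 ^ j) * Real.exp (-cG * 2 ^ j) := by
        rw [← Real.exp_add]; congr 1; ring
      rw [ha]; simp only []; rw [h1, h2]; ring
    rw [hrec]
    have h3 : (2:ℝ)^n * Real.exp (-cG * 2 ^ j) ≤ 1/2 := by
      calc (2:ℝ)^n * Real.exp (-cG * 2 ^ j) ≤ (2:ℝ)^n * (1 / (2 * (2:ℝ)^n)) :=
            mul_le_mul_of_nonneg_left hexpj hq.le
        _ = 1/2 := by field_simp
    rw [Real.norm_eq_abs, Real.norm_eq_abs, abs_of_pos (hapos j),
      abs_of_pos (by positivity : (0:ℝ) < a j * ((2:ℝ)^n * Real.exp (-cG * 2 ^ j)))]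
    calc a j * ((2:ℝ)^n * Real.exp (-cG * 2 ^ j)) ≤ a j * (1/2) :=
          mul_le_mul_of_nonneg_left h3 (hapos j).le
      _ = 1/2 * a j := by ring
  have htsum : 0 ≤ ∑' j, a j := tsum_nonneg fun j => (hapos j).le
  refine ⟨1 + ∑' j, a j, by linarith, fun y s hs => ?_⟩
  set F : ℕ → X → ℝ≥0∞ := fun j => (ball y ((2:ℝ)^(j+1) * s)).indicator
      (fun _ => ENNReal.ofReal (Real.exp (-cG * 2 ^ j))) with hF
  have hpt : ∀ w, ENNReal.ofReal (Real.exp (-cG * (dist y w / s) ^ α)) ≤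
      (ball y s).indicator 1 w + ∑' j, F j w := by
    intro w
    by_cases hw : dist y w < s
    · have hle1 : ENNReal.ofReal (Real.exp (-cG * (dist y w / s) ^ α)) ≤ 1 := by
        rw [ENNReal.ofReal_le_one]
        apply Real.exp_le_one_iff.2
        have h0 : (0:ℝ) ≤ (dist y w / s) ^ α := Real.rpow_nonneg (by positivity) α
        nlinarith
      have hmem : w ∈ ball y s := by rw [mem_ball, dist_comm]; exact hw
      calc ENNReal.ofReal (Real.exp (-cG * (dist y w / s) ^ α))
          ≤ (ball y s).indicator 1 w := by
            rw [Set.indicator_of_mem hmem]; simpa using hle1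
        _ ≤ _ := le_self_add
    · push_neg at hw
      set u := dist y w / s with hu
      have hu1 : 1 ≤ u := (one_le_div hs).2 hw
      have hu0 : (0:ℝ) ≤ u := by linarith
      have hN1 : 1 ≤ ⌊u⌋₊ := Nat.le_floor (by exact_mod_cast hu1)
      set j := Nat.log 2 ⌊u⌋₊ with hj
      have h2j : ((2:ℝ))^j ≤ u := by
        have h7 := Nat.pow_log_le_self 2 (by omega : ⌊u⌋₊ ≠ 0)
        calc ((2:ℝ))^j = ((2^j : ℕ) : ℝ) := by push_cast; ring
          _ ≤ (⌊u⌋₊ : ℝ) := by exact_mod_cast h7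
          _ ≤ u := Nat.floor_le hu0
      have hlt : u < (2:ℝ)^(j+1) := by
        have h5 := Nat.lt_pow_succ_log_self (by norm_num : 1 < 2) ⌊u⌋₊
        calc u < ⌊u⌋₊ + 1 := Nat.lt_floor_add_one u
          _ ≤ ((2:ℝ)^(j+1)) := by exact_mod_cast Nat.succ_le_of_lt h5
      have hmem : w ∈ ball y ((2:ℝ)^(j+1) * s) := by
        rw [mem_ball, dist_comm]
        calc dist y w = u * s := by rw [hu]; field_simp
          _ < (2:ℝ)^(j+1) * s := mul_lt_mul_of_pos_right hlt hs
      have hval : ENNReal.ofReal (Real.exp (-cG * (dist y w / s) ^ α)) ≤ F j w := by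
        rw [show F j w = ENNReal.ofReal (Real.exp (-cG * 2 ^ j)) from
          Set.indicator_of_mem hmem _]
        apply ENNReal.ofReal_le_ofReal
        apply Real.exp_le_exp.2
        have h6 : ((2:ℝ)^j : ℝ) ≤ u ^ α := by
          calc ((2:ℝ)^j) = ((2:ℝ)^j) ^ (1:ℝ) := (Real.rpow_one _).symm
            _ ≤ ((2:ℝ)^j) ^ α :=
                Real.rpow_le_rpow_of_exponent_le (one_le_pow₀ one_le_two) hα
            _ ≤ u ^ α := Real.rpow_le_rpow (by positivity) h2j (le_trans zero_le_one hα)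
        nlinarith
      calc ENNReal.ofReal (Real.exp (-cG * (dist y w / s) ^ α)) ≤ F j w := hval
        _ ≤ ∑' i, F i w := ENNReal.le_tsum j
        _ ≤ _ := le_add_self
  calc ∫⁻ w, ENNReal.ofReal (Real.exp (-cG * (dist y w / s) ^ α)) ∂μ
      ≤ ∫⁻ w, ((ball y s).indicator 1 w + ∑' j, F j w) ∂μ := lintegral_mono hpt
    _ = μ (ball y s) + ∑' j, ∫⁻ w, F j w ∂μ := by
        rw [lintegral_add_left ((measurable_one).indicator measurableSet_ball)]
        congr 1
        · exact lintegral_indicator_one measurableSet_ball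
        · exact lintegral_tsum fun j =>
            ((measurable_const).indicator measurableSet_ball).aemeasurable
    _ ≤ μ (ball y s) + ∑' j, ENNReal.ofReal (a j) * μ (ball y s) := by
        apply add_le_add_right
        apply ENNReal.tsum_le_tsum
        intro j
        rw [hF]; simp only []
        rw [lintegral_indicator_const measurableSet_ball]
        calc ENNReal.ofReal (Real.exp (-cG * 2^j)) * μ (ball y ((2:ℝ)^(j+1) * s))
            ≤ ENNReal.ofReal (Real.exp (-cG*2^j)) *
                (ENNReal.ofReal (Cd * ((2:ℝ)^(j+1)) ^ n) * μ (ball y s)) :=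
              mul_le_mul_right (hdoub y s _ hs (one_le_pow₀ one_le_two)) _
          _ = ENNReal.ofReal (a j) * μ (ball y s) := by
              rw [← mul_assoc, ← ENNReal.ofReal_mul (Real.exp_pos _).le]
              congr 2
              rw [ha]; ring
    _ = (1 + ENNReal.ofReal (∑' j, a j)) * μ (ball y s) := by
        rw [ENNReal.tsum_mul_right, ENNReal.ofReal_tsum_of_nonneg (fun j => (hapos j).le) hsum,
          add_mul, one_mul]
    _ = ENNReal.ofReal (1 + ∑' j, a j) * μ (ball y s) := by
        rw [ENNReal.ofReal_add zero_le_one htsum, ENNReal.ofReal_one]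

private lemma ennreal_rpow_two (x : ℝ≥0∞) : x ^ (2:ℝ) = x ^ (2:ℕ) := by
  rw [← ENNReal.rpow_natCast x 2]; norm_num

private lemma ennreal_sq_half (x : ℝ≥0∞) : (x ^ ((1:ℝ)/2)) ^ (2:ℝ) = x := by
  rw [← ENNReal.rpow_mul]; norm_num

private lemma lintegral_nnnorm_sq_eq {X : Type*} [MeasurableSpace X] (μ : Measure X)
    (f : X → ℂ) :
    ∫⁻ y, ((‖f y‖₊ : ℝ≥0∞)) ^ (2:ℕ) ∂μ = eLpNorm f 2 μ ^ (2:ℕ) := by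
  rw [eLpNorm_eq_lintegral_rpow_enorm_toReal (by norm_num) (by norm_num)]
  simp only [enorm_eq_nnnorm]
  have h2 : ((2:ℝ≥0∞)).toReal = 2 := by norm_num
  rw [h2]
  rw [← ennreal_rpow_two ((∫⁻ y, ((‖f y‖₊ : ℝ≥0∞)) ^ (2:ℝ) ∂μ) ^ ((1:ℝ)/2)),
    ennreal_sq_half]
  simp_rw [ennreal_rpow_two]

set_option maxHeartbeats 1600000 in
theorem gaussian_L2_off_diagonal_estimate
    {X : Type*} [MetricSpace X] [MeasurableSpace X] [BorelSpace X]
    (μ : Measure X)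
    (hball : ∀ (x : X) (r : ℝ), 0 < r → 0 < μ (ball x r) ∧ μ (ball x r) < ⊤)
    (Cd n : ℝ) (hCd : 0 < Cd) (hn : 0 < n)
    (hdoub : ∀ (x : X) (r lam : ℝ), 0 < r → 1 ≤ lam →
      μ (ball x (lam * r)) ≤ ENNReal.ofReal (Cd * lam ^ n) * μ (ball x r))
    (m : ℝ) (hm : 2 ≤ m)
    (p : ℝ → X → X → ℝ)
    (hmeas : ∀ t : ℝ, 0 < t → Measurable (Function.uncurry (p t)))
    (CG cG : ℝ) (hCG : 0 < CG) (hcG : 0 < cG)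
    (hGE : ∀ t : ℝ, 0 < t → ∀ x y : X,
      |p t x y| ≤ CG / (μ (ball x (t ^ (1 / m)))).toReal *
        Real.exp (-cG * (dist x y ^ m / t) ^ (1 / (m - 1))))
    (hcontr : ∀ t : ℝ, 0 < t → ∀ g : X → ℂ, MemLp g 2 μ →
      eLpNorm (fun y : X => ∫ w, (p t y w : ℂ) * g w ∂μ) 2 μ ≤ eLpNorm g 2 μ) :
    ∃ C > (0 : ℝ), ∃ c > (0 : ℝ),
      ∀ t : ℝ, 0 < t → ∀ k : ℕ, 1 ≤ k → ∀ r₁ r₂ : ℝ, 0 < r₁ → r₁ ≤ r₂ →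
        ∀ x : X, ∀ g : X → ℂ, Measurable g → (∃ Cb : ℝ, ∀ y : X, ‖g y‖ ≤ Cb) →
          ((μ (ball x r₁))⁻¹ *
              ∫⁻ y in ball x r₁,
                (‖∫ w in annulusSet x r₂ k, (p t y w : ℂ) * g w ∂μ‖₊ : ℝ≥0∞) ^ 2 ∂μ) ^
              ((1 : ℝ) / 2) ≤
            ENNReal.ofReal
                (C * Efactor m k (-c * (r₂ / t ^ (1 / m)) ^ (m / (m - 1)))) *
              ((μ (ball x (max r₁ (t ^ (1 / m)))))⁻¹ *
                  ∫⁻ w in annulusSet x r₂ k, (‖g w‖₊ : ℝ≥0∞) ^ 2 ∂μ) ^ ((1 : ℝ) / 2) := by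
  have hm1 : (1:ℝ) < m := by linarith
  have hm0 : (0:ℝ) < m := by linarith
  have hm1' : (0:ℝ) < m - 1 := by linarith
  set α := m / (m - 1) with hαdef
  have hα1 : 1 ≤ α := by rw [hαdef, le_div_iff₀ hm1']; linarith
  have hα0 : (0:ℝ) < α := lt_of_lt_of_le one_pos hα1
  obtain ⟨A, hA0, hA⟩ := gaussian_tail μ Cd n hCd hdoub cG α hcG hα1
  have h4α : (0:ℝ) < (4:ℝ) ^ α := Real.rpow_pos_of_pos (by norm_num) α
  set c := cG / (2 * 4 ^ α) with hcdef
  have hc : 0 < c := by positivity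
  obtain ⟨M, hM0, hM⟩ := poly_exp_bound n c hn hc
  have h2n : (0:ℝ) < (2:ℝ) ^ n := Real.rpow_pos_of_pos two_pos n
  set C := 1 + CG * Cd * 2 ^ n * (1 + M) + CG * (1 + A) * (1 + Cd * 2 ^ n) with hCdef
  have hpos1 : 0 < CG * Cd * 2 ^ n * (1 + M) := by positivity
  have hpos2 : 0 < CG * (1 + A) * (1 + Cd * 2 ^ n) := by positivity
  have hC1 : 1 ≤ C := by rw [hCdef]; linarith
  refine ⟨C, by linarith, c, hc, ?_⟩
  intro t ht k hk r₁ r₂ hr₁ hr12 x g hgmeas hgbdd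
  obtain ⟨Cb, hCb⟩ := hgbdd
  set s := t ^ (1/m) with hsdef
  have hs : 0 < s := Real.rpow_pos_of_pos ht _
  have hsm : s ^ m = t := by
    rw [hsdef, ← Real.rpow_mul ht.le, one_div, inv_mul_cancel₀ (ne_of_gt hm0), Real.rpow_one]
  have hr₂ : 0 < r₂ := lt_of_lt_of_le hr₁ hr12
  set U := annulusSet x r₂ k with hUdef
  have hUmeas : MeasurableSet U := by
    rw [hUdef, annulusSet]; split_ifs
    · exact measurableSet_ball
    · exact measurableSet_ball.diff measurableSet_ball
  have hUsub : U ⊆ ball x ((2:ℝ)^k * r₂) := by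
    rw [hUdef, annulusSet]; split_ifs with h
    · rw [h, pow_one]
    · exact Set.diff_subset
  -- kernel bound
  have hballpos : ∀ y : X, (0:ℝ) < (μ (ball y s)).toReal := fun y =>
    ENNReal.toReal_pos (hball y s hs).1.ne' (hball y s hs).2.ne
  have hker : ∀ y w : X, ENNReal.ofReal |p t y w| ≤
      ENNReal.ofReal CG * (μ (ball y s))⁻¹ *
        ENNReal.ofReal (Real.exp (-cG * (dist y w / s) ^ α)) := by
    intro y w
    have hge := hGE t ht y w
    rw [← hsdef] at hge
    have hexp : (dist y w ^ m / t) ^ (1/(m-1)) = (dist y w / s) ^ α := by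
      rw [show dist y w ^ m / t = (dist y w / s) ^ m by
          rw [Real.div_rpow dist_nonneg hs.le, hsm],
        ← Real.rpow_mul (div_nonneg dist_nonneg hs.le), mul_one_div, hαdef]
    rw [hexp] at hge
    calc ENNReal.ofReal |p t y w| ≤ ENNReal.ofReal (CG / (μ (ball y s)).toReal *
          Real.exp (-cG * (dist y w / s) ^ α)) := ENNReal.ofReal_le_ofReal hge
      _ = ENNReal.ofReal CG * (μ (ball y s))⁻¹ *
          ENNReal.ofReal (Real.exp (-cG * (dist y w / s) ^ α)) := by
        rw [ENNReal.ofReal_mul (by positivity), ENNReal.ofReal_div_of_pos (hballpos y),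
          ENNReal.ofReal_toReal (hball y s hs).2.ne, div_eq_mul_inv]
  set P : X → X → ℝ≥0∞ := fun y w => ENNReal.ofReal |p t y w| with hP
  have hPmeas : ∀ y, Measurable (P y) := fun y =>
    ENNReal.measurable_ofReal.comp
      ((continuous_abs.measurable).comp ((hmeas t ht).comp measurable_prodMk_left))
  have hFbound : ∀ y : X, (‖∫ w in U, (p t y w : ℂ) * g w ∂μ‖₊ : ℝ≥0∞) ≤
      ∫⁻ w in U, P y w * (‖g w‖₊ : ℝ≥0∞) ∂μ := by
    intro y
    calc (‖∫ w in U, (p t y w : ℂ) * g w ∂μ‖₊ : ℝ≥0∞)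
        ≤ ∫⁻ w in U, (‖(p t y w : ℂ) * g w‖₊ : ℝ≥0∞) ∂μ :=
          enorm_integral_le_lintegral_enorm _
      _ = ∫⁻ w in U, P y w * (‖g w‖₊ : ℝ≥0∞) ∂μ := by
          apply lintegral_congr
          intro w
          rw [nnnorm_mul, ENNReal.coe_mul, Complex.nnnorm_real, ← enorm_eq_nnnorm, Real.enorm_eq_ofReal_abs]
  -- Cauchy-Schwarz
  have hCS : ∀ y : X, (‖∫ w in U, (p t y w : ℂ) * g w ∂μ‖₊ : ℝ≥0∞) ^ (2:ℕ) ≤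
      (∫⁻ w in U, P y w ∂μ) * (∫⁻ w in U, P y w * (‖g w‖₊ : ℝ≥0∞) ^ (2:ℕ) ∂μ) := by
    intro y
    have hconj : Real.HolderConjugate 2 2 := Real.HolderConjugate.two_two
    have hfm : AEMeasurable (fun w => (P y w) ^ ((1:ℝ)/2)) (μ.restrict U) :=
      (ENNReal.continuous_rpow_const.measurable.comp (hPmeas y)).aemeasurable
    have hgm : AEMeasurable (fun w => (P y w) ^ ((1:ℝ)/2) * (‖g w‖₊ : ℝ≥0∞)) (μ.restrict U) :=
      ((ENNReal.continuous_rpow_const.measurable.comp (hPmeas y)).mul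
        hgmeas.enorm).aemeasurable
    have hH := ENNReal.lintegral_mul_le_Lp_mul_Lq (μ.restrict U) hconj hfm hgm
    simp only [Pi.mul_apply] at hH
    have e1 : ∀ w, (P y w) ^ ((1:ℝ)/2) * ((P y w) ^ ((1:ℝ)/2) * (‖g w‖₊ : ℝ≥0∞)) =
        P y w * (‖g w‖₊ : ℝ≥0∞) := by
      intro w
      rw [← mul_assoc, ← ENNReal.rpow_add_of_nonneg _ _ (by norm_num) (by norm_num)]
      norm_num
    have e2 : ∀ w, ((P y w) ^ ((1:ℝ)/2)) ^ (2:ℝ) = P y w := fun w => ennreal_sq_half _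
    have e3 : ∀ w, ((P y w) ^ ((1:ℝ)/2) * (‖g w‖₊ : ℝ≥0∞)) ^ (2:ℝ) =
        P y w * (‖g w‖₊ : ℝ≥0∞) ^ (2:ℕ) := by
      intro w
      rw [ENNReal.mul_rpow_of_nonneg _ _ (by norm_num : (0:ℝ) ≤ 2), ennreal_sq_half,
        ennreal_rpow_two]
    simp_rw [e1, e2, e3] at hH
    calc (‖∫ w in U, (p t y w : ℂ) * g w ∂μ‖₊ : ℝ≥0∞) ^ (2:ℕ)
        ≤ (∫⁻ w in U, P y w * (‖g w‖₊ : ℝ≥0∞) ∂μ) ^ (2:ℕ) :=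
          pow_le_pow_left' (hFbound y) 2
      _ ≤ ((∫⁻ w in U, P y w ∂μ) ^ ((1:ℝ)/2) *
            (∫⁻ w in U, P y w * (‖g w‖₊ : ℝ≥0∞) ^ (2:ℕ) ∂μ) ^ ((1:ℝ)/2)) ^ (2:ℕ) :=
          pow_le_pow_left' hH 2
      _ = (∫⁻ w in U, P y w ∂μ) * (∫⁻ w in U, P y w * (‖g w‖₊ : ℝ≥0∞) ^ (2:ℕ) ∂μ) := by
          rw [mul_pow, ← ennreal_rpow_two ((∫⁻ w in U, P y w ∂μ) ^ ((1:ℝ)/2)),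
            ← ennreal_rpow_two ((∫⁻ w in U, P y w * (‖g w‖₊ : ℝ≥0∞) ^ (2:ℕ) ∂μ) ^ ((1:ℝ)/2)),
            ennreal_sq_half, ennreal_sq_half]
  -- reduce to squared form
  set B₁ := ball x r₁ with hB₁
  set Bmax := ball x (max r₁ s) with hBmax
  have hmax0 : 0 < max r₁ s := lt_max_of_lt_left hr₁
  obtain ⟨hB₁0, hB₁t⟩ := hball x r₁ hr₁
  obtain ⟨hBm0, hBmt⟩ := hball x (max r₁ s) hmax0
  set G := ∫⁻ w in U, (‖g w‖₊ : ℝ≥0∞) ^ 2 ∂μ with hG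
  set E := Efactor m k (-c * (r₂ / s) ^ α) with hE
  suffices key : (μ B₁)⁻¹ * (∫⁻ y in B₁, (‖∫ w in U, (p t y w : ℂ) * g w ∂μ‖₊ : ℝ≥0∞) ^ 2 ∂μ)
      ≤ ENNReal.ofReal (C * E) ^ (2:ℕ) * ((μ Bmax)⁻¹ * G) by
    calc ((μ B₁)⁻¹ * ∫⁻ y in B₁, (‖∫ w in U, (p t y w : ℂ) * g w ∂μ‖₊ : ℝ≥0∞) ^ 2 ∂μ) ^ ((1:ℝ)/2)
        ≤ (ENNReal.ofReal (C * E) ^ (2:ℕ) * ((μ Bmax)⁻¹ * G)) ^ ((1:ℝ)/2) :=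
          ENNReal.rpow_le_rpow key (by norm_num)
      _ = ENNReal.ofReal (C * E) * ((μ Bmax)⁻¹ * G) ^ ((1:ℝ)/2) := by
          rw [ENNReal.mul_rpow_of_nonneg _ _ (by norm_num : (0:ℝ) ≤ 1/2)]
          congr 1
          rw [← ennreal_rpow_two (ENNReal.ofReal (C*E)), ← ENNReal.rpow_mul]
          norm_num
  by_cases hk1 : k = 1
  · by_cases hsr : s ≤ r₁
    · -- case A : k = 1 and s ≤ r₁ : use the L² contraction
      have hE1 : E = 1 := by rw [hE]; unfold Efactor; rw [if_pos hk1]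
      have hmaxB : Bmax = B₁ := by rw [hBmax, hB₁, max_eq_left hsr]
      set h : X → ℂ := U.indicator g with hh
      have hhmeas : Measurable h := hgmeas.indicator hUmeas
      have hGfin : (∫⁻ w, (‖h w‖₊ : ℝ≥0∞) ^ (2:ℕ) ∂μ) = G := by
        rw [hG, ← lintegral_indicator hUmeas]
        apply lintegral_congr
        intro w
        by_cases hw : w ∈ U
        · simp [hh, Set.indicator_of_mem hw]
        · simp [hh, Set.indicator_of_notMem hw]
      have hGlt : G < ⊤ := by
        rw [hG]
        have hstep : ∫⁻ w in U, (‖g w‖₊ : ℝ≥0∞) ^ 2 ∂μ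
            ≤ (ENNReal.ofReal Cb)^2 * μ (ball x ((2:ℝ)^k * r₂)) := by
          calc ∫⁻ w in U, (‖g w‖₊ : ℝ≥0∞) ^ 2 ∂μ
              ≤ ∫⁻ _ in U, (ENNReal.ofReal Cb) ^ 2 ∂μ := by
                apply setLIntegral_mono' hUmeas
                intro w _
                apply pow_le_pow_left'
                rw [← enorm_eq_nnnorm, ← ofReal_norm]
                exact ENNReal.ofReal_le_ofReal (hCb w)
            _ = (ENNReal.ofReal Cb)^2 * μ U := setLIntegral_const _ _
            _ ≤ (ENNReal.ofReal Cb)^2 * μ (ball x ((2:ℝ)^k * r₂)) :=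
                mul_le_mul_right (measure_mono hUsub) _
        refine lt_of_le_of_lt hstep ?_
        exact ENNReal.mul_lt_top
          (ENNReal.pow_lt_top ENNReal.ofReal_lt_top)
          (hball x ((2:ℝ)^k * r₂) (by positivity)).2
      have hMem : MemLp h 2 μ := by
        refine ⟨hhmeas.aestronglyMeasurable, ?_⟩
        have e := lintegral_nnnorm_sq_eq μ h
        rw [hGfin] at e
        have hpow : eLpNorm h 2 μ ^ (2:ℕ) < ⊤ := by rw [← e]; exact hGlt
        by_contra hcon
        push_neg at hcon
        rw [top_le_iff.1 hcon, pow_two, ENNReal.top_mul_top] at hpow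
        exact lt_irrefl _ hpow
      have hcon := hcontr t ht h hMem
      have hFF : (fun y => ∫ w, (p t y w : ℂ) * h w ∂μ) =
          (fun y => ∫ w in U, (p t y w : ℂ) * g w ∂μ) := by
        funext y
        rw [← integral_indicator hUmeas]
        congr 1
        funext w
        by_cases hw : w ∈ U
        · simp [hh, Set.indicator_of_mem hw]
        · simp [hh, Set.indicator_of_notMem hw]
      rw [hFF] at hcon
      rw [hmaxB, hE1, mul_one]
      calc (μ B₁)⁻¹ * ∫⁻ y in B₁, (‖∫ w in U, (p t y w : ℂ) * g w ∂μ‖₊ : ℝ≥0∞) ^ 2 ∂μ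
          ≤ (μ B₁)⁻¹ * ∫⁻ y, (‖∫ w in U, (p t y w : ℂ) * g w ∂μ‖₊ : ℝ≥0∞) ^ 2 ∂μ :=
            mul_le_mul_right (setLIntegral_le_lintegral _ _) _
        _ = (μ B₁)⁻¹ * (eLpNorm (fun y => ∫ w in U, (p t y w : ℂ) * g w ∂μ) 2 μ) ^ (2:ℕ) := by
            rw [lintegral_nnnorm_sq_eq]
        _ ≤ (μ B₁)⁻¹ * (eLpNorm h 2 μ) ^ (2:ℕ) :=
            mul_le_mul_right (pow_le_pow_left' hcon 2) _
        _ = (μ B₁)⁻¹ * G := by rw [← lintegral_nnnorm_sq_eq, hGfin]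
        _ ≤ ENNReal.ofReal C ^ (2:ℕ) * ((μ B₁)⁻¹ * G) := by
            apply le_mul_of_one_le_left (by positivity)
            exact one_le_pow₀ (ENNReal.one_le_ofReal.2 hC1)
    · -- case B : k = 1 and r₁ < s : pointwise bound via the Gaussian tail
      have hr₁s : r₁ < s := lt_of_not_ge hsr
      have hE1 : E = 1 := by rw [hE]; unfold Efactor; rw [if_pos hk1]
      have hmaxB : Bmax = ball x s := by rw [hBmax, max_eq_right hr₁s.le]
      rw [hE1, mul_one, hmaxB]
      obtain ⟨hxs0, hxst⟩ := hball x s hs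
      apply avg_pointwise μ measurableSet_ball hB₁0.ne' hB₁t.ne
      intro y hy
      obtain ⟨hys0, hyst⟩ := hball y s hs
      have hKne : ENNReal.ofReal CG * (μ (ball y s))⁻¹ ≠ ⊤ :=
        ENNReal.mul_ne_top ENNReal.ofReal_ne_top (ENNReal.inv_ne_top.2 hys0.ne')
      have hb1 : ∫⁻ w in U, P y w ∂μ ≤ ENNReal.ofReal (CG * A) := by
        have step : ∫⁻ w in U, P y w ∂μ ≤ ENNReal.ofReal CG * (μ (ball y s))⁻¹ *
            (ENNReal.ofReal A * μ (ball y s)) := by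
          calc ∫⁻ w in U, P y w ∂μ
              ≤ ∫⁻ w in U, (ENNReal.ofReal CG * (μ (ball y s))⁻¹) *
                  ENNReal.ofReal (Real.exp (-cG * (dist y w / s) ^ α)) ∂μ :=
                setLIntegral_mono' hUmeas fun w _ => hker y w
            _ = (ENNReal.ofReal CG * (μ (ball y s))⁻¹) *
                ∫⁻ w in U, ENNReal.ofReal (Real.exp (-cG * (dist y w / s) ^ α)) ∂μ :=
                lintegral_const_mul' _ _ hKne
            _ ≤ _ := mul_le_mul_right ((setLIntegral_le_lintegral _ _).trans (hA y s hs)) _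
        refine step.trans (le_of_eq ?_)
        rw [ENNReal.ofReal_mul hCG.le]
        calc ENNReal.ofReal CG * (μ (ball y s))⁻¹ * (ENNReal.ofReal A * μ (ball y s))
            = (ENNReal.ofReal CG * ENNReal.ofReal A) * ((μ (ball y s))⁻¹ * μ (ball y s)) := by
              ring
          _ = ENNReal.ofReal CG * ENNReal.ofReal A := by
              rw [ENNReal.inv_mul_cancel hys0.ne' hyst.ne, mul_one]
      have hb2 : ∫⁻ w in U, P y w * (‖g w‖₊ : ℝ≥0∞) ^ 2 ∂μ ≤
          (ENNReal.ofReal CG * (μ (ball y s))⁻¹) * G := by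
        calc ∫⁻ w in U, P y w * (‖g w‖₊ : ℝ≥0∞) ^ 2 ∂μ
            ≤ ∫⁻ w in U, (ENNReal.ofReal CG * (μ (ball y s))⁻¹) * (‖g w‖₊ : ℝ≥0∞) ^ 2 ∂μ := by
              apply setLIntegral_mono' hUmeas
              intro w _
              apply mul_le_mul_left
              calc P y w ≤ ENNReal.ofReal CG * (μ (ball y s))⁻¹ *
                    ENNReal.ofReal (Real.exp (-cG * (dist y w / s) ^ α)) := hker y w
                _ ≤ ENNReal.ofReal CG * (μ (ball y s))⁻¹ * 1 := by
                    apply mul_le_mul_right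
                    rw [ENNReal.ofReal_le_one]
                    apply Real.exp_le_one_iff.2
                    have h0 : (0:ℝ) ≤ (dist y w / s) ^ α := Real.rpow_nonneg (by positivity) α
                    have h0' := mul_nonneg hcG.le h0
                    linarith
                _ = _ := mul_one _
          _ = _ := lintegral_const_mul' _ _ hKne
      have hincl : ball x s ⊆ ball y (2 * s) := by
        intro z hz
        rw [mem_ball] at hz ⊢
        have h8 : dist y x < r₁ := hy
        calc dist z y ≤ dist z x + dist x y := dist_triangle z x y
          _ < s + r₁ := by rw [dist_comm x y]; linarith
          _ ≤ 2 * s := by linarith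
      have hcomp : (μ (ball y s))⁻¹ ≤ ENNReal.ofReal (Cd * 2 ^ n) * (μ (ball x s))⁻¹ := by
        apply ennreal_inv_le_inv_of_le hxs0.ne' hxst.ne hys0.ne' hyst.ne
        calc μ (ball x s) ≤ μ (ball y (2 * s)) := measure_mono hincl
          _ ≤ ENNReal.ofReal (Cd * 2 ^ n) * μ (ball y s) := hdoub y s 2 hs (by norm_num : (1:ℝ) ≤ 2)
      have hCsq : CG * A * CG * (Cd * 2 ^ n) ≤ C ^ 2 := by
        have e1 : A ≤ (1+A)^2 := by
          have hh : (1+A)^2 = 1 + 2*A + A^2 := by ring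
          have := sq_nonneg A
          linarith
        have e2 : Cd * 2^n ≤ (1 + Cd * 2^n)^2 := by
          have hh : (1 + Cd*2^n)^2 = 1 + 2*(Cd*2^n) + (Cd*2^n)^2 := by ring
          have h1 := sq_nonneg (Cd*2^n)
          have h2 := mul_pos hCd h2n
          linarith
        have hCge : CG * (1+A) * (1 + Cd * 2^n) ≤ C := by rw [hCdef]; linarith
        calc CG * A * CG * (Cd * 2^n) = CG^2 * (A * (Cd * 2^n)) := by ring
          _ ≤ CG^2 * ((1+A)^2 * ((1 + Cd * 2^n)^2)) := by
              apply mul_le_mul_of_nonneg_left _ (sq_nonneg CG)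
              exact mul_le_mul e1 e2 (by positivity) (by positivity)
          _ = (CG * (1+A) * (1 + Cd * 2^n))^2 := by ring
          _ ≤ C^2 := pow_le_pow_left₀ (by positivity) hCge 2
      calc (‖∫ w in U, (p t y w : ℂ) * g w ∂μ‖₊ : ℝ≥0∞) ^ 2
          ≤ (∫⁻ w in U, P y w ∂μ) * (∫⁻ w in U, P y w * (‖g w‖₊ : ℝ≥0∞) ^ 2 ∂μ) := hCS y
        _ ≤ ENNReal.ofReal (CG * A) * ((ENNReal.ofReal CG * (μ (ball y s))⁻¹) * G) :=
            mul_le_mul' hb1 hb2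
        _ = (ENNReal.ofReal (CG*A) * ENNReal.ofReal CG) * ((μ (ball y s))⁻¹ * G) := by ring
        _ ≤ (ENNReal.ofReal (CG*A) * ENNReal.ofReal CG) *
            ((ENNReal.ofReal (Cd * 2^n) * (μ (ball x s))⁻¹) * G) :=
            mul_le_mul_right (mul_le_mul_left hcomp _) _
        _ = (ENNReal.ofReal (CG*A) * ENNReal.ofReal CG * ENNReal.ofReal (Cd*2^n)) *
            ((μ (ball x s))⁻¹ * G) := by ring
        _ ≤ ENNReal.ofReal C ^ (2:ℕ) * ((μ (ball x s))⁻¹ * G) := by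
            apply mul_le_mul_left
            rw [← ENNReal.ofReal_mul (by positivity), ← ENNReal.ofReal_mul (by positivity),
              ← ENNReal.ofReal_pow (by linarith : (0:ℝ) ≤ C)]
            exact ENNReal.ofReal_le_ofReal hCsq
  · -- case C : k ≥ 2
    have hk2 : 2 ≤ k := by omega
    have h2k1 : (1:ℝ) ≤ (2:ℝ)^k := one_le_pow₀ one_le_two
    have h4le : (4:ℝ) ≤ (2:ℝ)^k := by
      calc (4:ℝ) = 2^2 := by norm_num
        _ ≤ 2^k := pow_le_pow_right₀ one_le_two hk2
    set σ := r₂ / s with hσdef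
    have hσ : 0 < σ := by positivity
    set θ := (2:ℝ)^k * σ with hθdef
    have hθ : 0 < θ := by positivity
    have hθα : 0 < θ ^ α := Real.rpow_pos_of_pos hθ α
    have hEeq : E = Real.exp (-(c * θ^α)) := by
      rw [hE]; unfold Efactor; rw [if_neg hk1]
      congr 1
      have h2kα : ((2:ℝ)^k)^α = (2:ℝ) ^ (m * (k:ℝ) / (m-1)) := by
        rw [← Real.rpow_natCast 2 k, ← Real.rpow_mul (by norm_num : (0:ℝ) ≤ 2)]
        congr 1
        rw [hαdef]; field_simp
      have hmul : θ^α = ((2:ℝ)^k)^α * σ^α := Real.mul_rpow (by positivity) (by positivity)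
      rw [hmul, h2kα]; ring
    set d₀ := (2:ℝ)^k * r₂ / 4 with hd₀def
    have hd₀ : 0 < d₀ := by positivity
    set Estar := Real.exp (-cG * (d₀ / s) ^ α) with hEstardef
    have hEstarEq : Estar = Real.exp (-(c * θ^α)) * Real.exp (-(c * θ^α)) := by
      rw [hEstardef, ← Real.exp_add]
      congr 1
      have hds : d₀ / s = θ / 4 := by
        rw [hd₀def, hθdef, hσdef]; field_simp
      rw [hds, Real.div_rpow hθ.le (by norm_num : (0:ℝ) ≤ 4)]
      have h4 : (4:ℝ)^α ≠ 0 := ne_of_gt h4α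
      rw [hcdef]; field_simp; ring
    -- pointwise kernel bound on U
    apply avg_pointwise μ measurableSet_ball hB₁0.ne' hB₁t.ne
    intro y hy
    obtain ⟨hys0, hyst⟩ := hball y s hs
    have hyx : dist y x < r₁ := hy
    have hdistU : ∀ w ∈ U, d₀ ≤ dist y w := by
      intro w hw
      rw [hUdef] at hw
      unfold annulusSet at hw
      rw [if_neg hk1] at hw
      have hw2 : ¬ (dist w x < 2^(k-1) * r₂) := fun hcon => hw.2 (mem_ball.2 hcon)
      push_neg at hw2
      have hpk : (2:ℝ)^(k-1) * 2 = 2^k := by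
        rw [← pow_succ]
        congr 1
        omega
      have htri : dist w x ≤ dist w y + dist y x := dist_triangle w y x
      have hc2 : dist y w = dist w y := dist_comm y w
      rw [hd₀def, hc2]
      have heq : (2:ℝ)^(k-1) * r₂ = 2^k * r₂ / 2 := by rw [← hpk]; ring
      have hw2' : 2^k * r₂ / 2 ≤ dist w x := by linarith
      have h42 : (4:ℝ) * r₂ ≤ 2^k * r₂ := mul_le_mul_of_nonneg_right h4le hr₂.le
      linarith
    have hPsup : ∀ w ∈ U, P y w ≤ ENNReal.ofReal (CG * Estar) * (μ (ball y s))⁻¹ := by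
      intro w hw
      calc P y w ≤ ENNReal.ofReal CG * (μ (ball y s))⁻¹ *
            ENNReal.ofReal (Real.exp (-cG * (dist y w / s) ^ α)) := hker y w
        _ ≤ ENNReal.ofReal CG * (μ (ball y s))⁻¹ * ENNReal.ofReal Estar := by
            apply mul_le_mul_right
            apply ENNReal.ofReal_le_ofReal
            rw [hEstardef]
            apply Real.exp_le_exp.2
            have hdd0 : d₀ / s ≤ dist y w / s := by gcongr; exact hdistU w hw
            have hdd : (d₀/s)^α ≤ (dist y w / s)^α :=
              Real.rpow_le_rpow (by positivity) hdd0 hα0.le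
            have := mul_le_mul_of_nonneg_left hdd hcG.le
            linarith
        _ = ENNReal.ofReal (CG * Estar) * (μ (ball y s))⁻¹ := by
            rw [ENNReal.ofReal_mul hCG.le]; ring
    have hKne : ENNReal.ofReal (CG * Estar) * (μ (ball y s))⁻¹ ≠ ⊤ :=
      ENNReal.mul_ne_top ENNReal.ofReal_ne_top (ENNReal.inv_ne_top.2 hys0.ne')
    have hb1 : ∫⁻ w in U, P y w ∂μ ≤
        (ENNReal.ofReal (CG * Estar) * (μ (ball y s))⁻¹) * μ U := by
      calc ∫⁻ w in U, P y w ∂μ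
          ≤ ∫⁻ _ in U, ENNReal.ofReal (CG * Estar) * (μ (ball y s))⁻¹ ∂μ :=
            setLIntegral_mono' hUmeas hPsup
        _ = _ := setLIntegral_const _ _
    have hb2 : ∫⁻ w in U, P y w * (‖g w‖₊ : ℝ≥0∞) ^ 2 ∂μ ≤
        (ENNReal.ofReal (CG * Estar) * (μ (ball y s))⁻¹) * G := by
      calc ∫⁻ w in U, P y w * (‖g w‖₊ : ℝ≥0∞) ^ 2 ∂μ
          ≤ ∫⁻ w in U, (ENNReal.ofReal (CG * Estar) * (μ (ball y s))⁻¹) *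
              (‖g w‖₊ : ℝ≥0∞) ^ 2 ∂μ :=
            setLIntegral_mono' hUmeas fun w hw => mul_le_mul_left (hPsup w hw) _
        _ = _ := lintegral_const_mul' _ _ hKne
    -- doubling comparisons
    set lam := max 2 (2 * θ) with hlamdef
    have hlam2 : (2:ℝ) ≤ lam := le_max_left _ _
    have hlam1 : (1:ℝ) ≤ lam := by linarith
    have hlamθ : 2 * θ ≤ lam := le_max_right _ _
    have hθs : θ * s = 2^k * r₂ := by
      rw [hθdef, hσdef]; field_simp
    have hlams : (2:ℝ)^k * r₂ * 2 ≤ lam * s := by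
      calc (2:ℝ)^k * r₂ * 2 = (2 * θ) * s := by rw [← hθs]; ring
        _ ≤ lam * s := mul_le_mul_of_nonneg_right hlamθ hs.le
    have hU' : U ⊆ ball y (lam * s) := by
      intro z hz
      have h9 : dist z x < 2^k * r₂ := mem_ball.1 (hUsub hz)
      rw [mem_ball]
      calc dist z y ≤ dist z x + dist x y := dist_triangle z x y
        _ < 2^k * r₂ + r₁ := by rw [dist_comm x y]; linarith
        _ ≤ lam * s := by
            have hr2k : r₂ ≤ 2^k * r₂ := le_mul_of_one_le_left hr₂.le h2k1
            linarith
    have hB' : Bmax ⊆ ball y (lam * s) := by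
      intro z hz
      rw [hBmax, mem_ball] at hz
      rw [mem_ball]
      have h10 : dist z y ≤ dist z x + dist x y := dist_triangle z x y
      have h11 : dist x y < r₁ := by rw [dist_comm]; exact hyx
      have h12 : max r₁ s + r₁ ≤ lam * s := by
        have hr2k : r₂ ≤ 2^k * r₂ := le_mul_of_one_le_left hr₂.le h2k1
        rcases le_total r₁ s with hrs | hrs
        · rw [max_eq_right hrs]
          have h2s : 2 * s ≤ lam * s := mul_le_mul_of_nonneg_right hlam2 hs.le
          linarith
        · rw [max_eq_left hrs]
          linarith
      linarith
    have hUm : μ U ≤ ENNReal.ofReal (Cd * lam^n) * μ (ball y s) :=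
      (measure_mono hU').trans (hdoub y s lam hs hlam1)
    have hBm' : μ Bmax ≤ ENNReal.ofReal (Cd * lam^n) * μ (ball y s) :=
      (measure_mono hB').trans (hdoub y s lam hs hlam1)
    -- the real-number inequality
    have hlamn : (0:ℝ) < lam ^ n := Real.rpow_pos_of_pos (by linarith) n
    have hreal : CG * Estar * (Cd * lam ^ n) ≤ C * E := by
      rw [hEstarEq, hEeq]
      set e := Real.exp (-(c * θ^α)) with hedef
      have he0 : 0 < e := Real.exp_pos _
      have he1 : e ≤ 1 := by
        rw [hedef]
        apply Real.exp_le_one_iff.2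
        have := mul_pos hc hθα
        linarith
      have hmain2 : CG * Cd * lam^n * e ≤ C := by
        have hlam_eq : lam = 2 * max 1 θ := by
          rw [hlamdef, mul_max_of_nonneg _ _ (by norm_num : (0:ℝ) ≤ 2), mul_one]
        have hmaxpos : (0:ℝ) < max 1 θ := lt_max_of_lt_left one_pos
        have hlamn_eq : lam ^ n = 2^n * (max 1 θ)^n := by
          rw [hlam_eq, Real.mul_rpow (by norm_num) hmaxpos.le]
        rw [hlamn_eq]
        rcases le_total θ 1 with hθ1 | hθ1
        · rw [max_eq_left hθ1, Real.one_rpow, mul_one]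
          have hX : 0 < CG * Cd * 2^n := by positivity
          have hle : CG * Cd * 2^n * e ≤ CG * Cd * 2^n := mul_le_of_le_one_right hX.le he1
          have hexp2 : CG*Cd*2^n*(1+M) = CG*Cd*2^n + CG*Cd*2^n*M := by ring
          have hXM := mul_nonneg hX.le hM0.le
          have hCg : CG * Cd * 2^n ≤ C := by rw [hCdef]; linarith
          linarith
        · rw [max_eq_right hθ1]
          have hee : e ≤ Real.exp (-c * θ) := by
            rw [hedef]
            apply Real.exp_le_exp.2
            have hθθ : θ ≤ θ ^ α := by
              calc θ = θ ^ (1:ℝ) := (Real.rpow_one θ).symm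
                _ ≤ θ ^ α := Real.rpow_le_rpow_of_exponent_le hθ1 hα1
            have := mul_le_mul_of_nonneg_left hθθ hc.le
            linarith
          have hθn : (0:ℝ) ≤ θ ^ n := (Real.rpow_pos_of_pos hθ n).le
          have hMθ : θ^n * e ≤ M := by
            calc θ^n * e ≤ θ^n * Real.exp (-c * θ) := mul_le_mul_of_nonneg_left hee hθn
              _ ≤ M := hM θ hθ1
          have hX : 0 < CG * Cd * 2^n := by positivity
          calc CG * Cd * (2^n * θ^n) * e = (CG * Cd * 2^n) * (θ^n * e) := by ring
            _ ≤ (CG * Cd * 2^n) * M := mul_le_mul_of_nonneg_left hMθ hX.le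
            _ ≤ C := by
              have hexp2 : CG*Cd*2^n*(1+M) = CG*Cd*2^n + CG*Cd*2^n*M := by ring
              rw [hCdef]; linarith
      calc CG * (e * e) * (Cd * lam^n) = (CG * Cd * lam^n * e) * e := by ring
        _ ≤ C * e := mul_le_mul_of_nonneg_right hmain2 he0.le
    -- assemble
    have hEstar0 : 0 ≤ CG * Estar := by positivity
    have hmain : (ENNReal.ofReal (CG * Estar) * (μ (ball y s))⁻¹) *
        (ENNReal.ofReal (CG * Estar) * (μ (ball y s))⁻¹) * μ U ≤
        ENNReal.ofReal (C * E) ^ (2:ℕ) * (μ Bmax)⁻¹ := by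
      rw [ennreal_le_mul_inv_iff hBm0.ne' hBmt.ne]
      calc ENNReal.ofReal (CG * Estar) * (μ (ball y s))⁻¹ *
            (ENNReal.ofReal (CG * Estar) * (μ (ball y s))⁻¹) * μ U * μ Bmax
          ≤ ENNReal.ofReal (CG * Estar) * (μ (ball y s))⁻¹ *
            (ENNReal.ofReal (CG * Estar) * (μ (ball y s))⁻¹) *
            (ENNReal.ofReal (Cd * lam^n) * μ (ball y s)) *
            (ENNReal.ofReal (Cd * lam^n) * μ (ball y s)) := by
            exact mul_le_mul' (mul_le_mul_right hUm _) hBm'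
        _ = (ENNReal.ofReal (CG * Estar) * ENNReal.ofReal (Cd * lam^n)) ^ (2:ℕ) *
            (((μ (ball y s))⁻¹ * μ (ball y s)) * ((μ (ball y s))⁻¹ * μ (ball y s))) := by
            ring
        _ = (ENNReal.ofReal (CG * Estar) * ENNReal.ofReal (Cd * lam^n)) ^ (2:ℕ) := by
            rw [ENNReal.inv_mul_cancel hys0.ne' hyst.ne, one_mul, mul_one]
        _ ≤ ENNReal.ofReal (C * E) ^ (2:ℕ) := by
            apply pow_le_pow_left'
            rw [← ENNReal.ofReal_mul hEstar0]
            exact ENNReal.ofReal_le_ofReal hreal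
    calc (‖∫ w in U, (p t y w : ℂ) * g w ∂μ‖₊ : ℝ≥0∞) ^ 2
        ≤ (∫⁻ w in U, P y w ∂μ) * (∫⁻ w in U, P y w * (‖g w‖₊ : ℝ≥0∞) ^ 2 ∂μ) := hCS y
      _ ≤ ((ENNReal.ofReal (CG * Estar) * (μ (ball y s))⁻¹) * μ U) *
          ((ENNReal.ofReal (CG * Estar) * (μ (ball y s))⁻¹) * G) := mul_le_mul' hb1 hb2
      _ = ((ENNReal.ofReal (CG * Estar) * (μ (ball y s))⁻¹) *
          (ENNReal.ofReal (CG * Estar) * (μ (ball y s))⁻¹) * μ U) * G := by ring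
      _ ≤ (ENNReal.ofReal (C * E) ^ (2:ℕ) * (μ Bmax)⁻¹) * G := mul_le_mul_left hmain _
      _ = ENNReal.ofReal (C * E) ^ (2:ℕ) * ((μ Bmax)⁻¹ * G) := by ring
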